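/- arXiv:2005.05745 — 2 statements merged into one kernel-verified Lean document; each statement's English description precedes it below -/
import Mathlib

section
/- For A-bounded operators P, Q, R, S on H, the 𝔸-numerical radius of the off-diagonal part satisfies ω_𝔸([[0, Q],[R, 0]]) ≤ ω_𝔸([[P, Q],[R, S]]), where the matrices act on H⊕H and 𝔸 = diag(A,A). -/
open ContinuousLinearMap

/-- The `A`-seminorm of a vector: `‖x‖_A = √⟨Ax, x⟩`. -/
noncomputable def vnormA {H : Type*} [NormedAddCommGroup H] [InnerProductSpace ℂ H]
    (A : H →L[ℂ] H) (x : H) : ℝ :=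
  Real.sqrt (RCLike.re (inner ℂ (A x) x : ℂ))

/-- `T` is `A`-bounded, i.e. `T ∈ B_{A^{1/2}}(H)`. -/
def ABounded {H : Type*} [NormedAddCommGroup H] [InnerProductSpace ℂ H]
    (A T : H →L[ℂ] H) : Prop :=
  ∃ c : ℝ, 0 < c ∧ ∀ x, vnormA A (T x) ≤ c * vnormA A x

/-- The `A`-operator seminorm `‖T‖_A = sup{‖Tx‖_A : ‖x‖_A = 1}`. -/
noncomputable def opNormA {H : Type*} [NormedAddCommGroup H] [InnerProductSpace ℂ H]
    (A T : H →L[ℂ] H) : ℝ :=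
  sSup {c : ℝ | ∃ x : H, vnormA A x = 1 ∧ c = vnormA A (T x)}

/-- The `A`-numerical radius `ω_A(T) = sup{|⟨ATx, x⟩| : ‖x‖_A = 1}`. -/
noncomputable def wA {H : Type*} [NormedAddCommGroup H] [InnerProductSpace ℂ H]
    (A T : H →L[ℂ] H) : ℝ :=
  sSup {c : ℝ | ∃ x : H, vnormA A x = 1 ∧ c = ‖(inner ℂ (A (T x)) x : ℂ)‖}

/-- `Ts` is the reduced (Douglas) solution of `AX = T*A`, i.e. `Ts = T^{♯_A}`. -/
def IsReducedAdjoint {H : Type*} [NormedAddCommGroup H] [InnerProductSpace ℂ H]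
    [CompleteSpace H] (A T Ts : H →L[ℂ] H) : Prop :=
  A ∘L Ts = (ContinuousLinearMap.adjoint T) ∘L A ∧
    ∀ y, Ts y ∈ closure (Set.range A)

/-- The `2 × 2` operator matrix `[[P, Q], [R, S]]` acting on `H ⊕ H` (with the `ℓ²` product
inner product). -/
noncomputable def blk {H : Type*} [NormedAddCommGroup H] [InnerProductSpace ℂ H]
    (P Q R S : H →L[ℂ] H) : WithLp 2 (H × H) →L[ℂ] WithLp 2 (H × H) :=
  letI e := (WithLp.prodContinuousLinearEquiv 2 ℂ H H)
  (e.symm.toContinuousLinearMap) ∘L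
    ((P.comp (fst ℂ H H) + Q.comp (snd ℂ H H)).prod
      (R.comp (fst ℂ H H) + S.comp (snd ℂ H H))) ∘L
    (e.toContinuousLinearMap)

/-- `𝔸 = diag(A, A)` on `H ⊕ H`. -/
noncomputable def AA {H : Type*} [NormedAddCommGroup H] [InnerProductSpace ℂ H]
    (A : H →L[ℂ] H) : WithLp 2 (H × H) →L[ℂ] WithLp 2 (H × H) :=
  blk A 0 0 A

section AuxCS

variable {H : Type*} [NormedAddCommGroup H] [InnerProductSpace ℂ H]

lemma reA_nonneg [CompleteSpace H] (A : H →L[ℂ] H) (hA : A.IsPositive) (x : H) :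
    0 ≤ RCLike.re (inner ℂ (A x) x : ℂ) := hA.2 x

lemma vnormA_nonneg' (A : H →L[ℂ] H) (x : H) : 0 ≤ vnormA A x := Real.sqrt_nonneg _

/-- Cauchy–Schwarz for the semi-inner product induced by a positive operator. -/
lemma csA [CompleteSpace H] (A : H →L[ℂ] H) (hA : A.IsPositive) (x y : H) :
    ‖(inner ℂ (A x) y : ℂ)‖ ≤ vnormA A x * vnormA A y := by
  have hsym := (ContinuousLinearMap.isSelfAdjoint_iff_isSymmetric.mp hA.isSelfAdjoint)
  letI c : PreInnerProductSpace.Core ℂ H :=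
    { inner := fun u v => inner ℂ (A u) v
      conj_inner_symm := fun u v => (inner_conj_symm u (A v)).trans (hsym u v).symm
      re_inner_nonneg := fun u => reA_nonneg A hA u
      add_left := fun u v w => by simp [inner_add_left]
      smul_left := fun u v r => by simp [inner_smul_left, mul_comm] }
  have h2 : ‖(inner ℂ (A x) y : ℂ)‖ * ‖(inner ℂ (A y) x : ℂ)‖
      ≤ RCLike.re (inner ℂ (A x) x : ℂ) * RCLike.re (inner ℂ (A y) y : ℂ) :=
    @InnerProductSpace.Core.inner_mul_inner_self_le ℂ H _ _ _ c x y
  have hnorm : ‖(inner ℂ (A y) x : ℂ)‖ = ‖(inner ℂ (A x) y : ℂ)‖ := by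
    calc ‖(inner ℂ (A y) x : ℂ)‖ = ‖(starRingEnd ℂ) (inner ℂ (A y) x : ℂ)‖ :=
          (RCLike.norm_conj _).symm
      _ = ‖(inner ℂ x (A y) : ℂ)‖ := by rw [inner_conj_symm]
      _ = ‖(inner ℂ (A x) y : ℂ)‖ := congrArg norm (hsym x y).symm
  rw [hnorm] at h2
  unfold vnormA
  rw [← Real.sqrt_mul (reA_nonneg A hA x)]
  rw [show ‖(inner ℂ (A x) y : ℂ)‖ = ‖(inner ℂ (A x) y : ℂ)‖ from rfl]
  rw [Real.le_sqrt (norm_nonneg _)]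
  · nlinarith [norm_nonneg (inner ℂ (A x) y : ℂ)]
  · exact mul_nonneg (reA_nonneg A hA x) (reA_nonneg A hA y)

end AuxCS

theorem stmt1 {H : Type*} [NormedAddCommGroup H] [InnerProductSpace ℂ H] [CompleteSpace H]
    (A : H →L[ℂ] H) (hA : A.IsPositive)
    (P Q R S : H →L[ℂ] H) (hP : ABounded A P) (hQ : ABounded A Q)
    (hR : ABounded A R) (hS : ABounded A S) :
    wA (AA A) (blk 0 Q R 0) ≤ wA (AA A) (blk P Q R S) := by
  obtain ⟨cP, hcP, hPb⟩ := hP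
  obtain ⟨cQ, hcQ, hQb⟩ := hQ
  obtain ⟨cR, hcR, hRb⟩ := hR
  obtain ⟨cS, hcS, hSb⟩ := hS
  have hAA1 : ∀ y : WithLp 2 (H × H), (AA A y).fst = A y.fst := fun y => by
    show A y.fst + (0 : H →L[ℂ] H) y.snd = A y.fst; simp
  have hAA2 : ∀ y : WithLp 2 (H × H), (AA A y).snd = A y.snd := fun y => by
    show (0 : H →L[ℂ] H) y.fst + A y.snd = A y.snd; simp
  have hinner : ∀ (P' Q' R' S' : H →L[ℂ] H) (x : WithLp 2 (H × H)),
      (inner ℂ (AA A (blk P' Q' R' S' x)) x : ℂ)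
        = inner ℂ (A (P' x.fst)) x.fst + inner ℂ (A (Q' x.snd)) x.fst
          + (inner ℂ (A (R' x.fst)) x.snd + inner ℂ (A (S' x.snd)) x.snd) := by
    intro P' Q' R' S' x
    rw [WithLp.prod_inner_apply]
    simp only [WithLp.ofLp_fst, WithLp.ofLp_snd]
    rw [hAA1, hAA2]
    rw [show (blk P' Q' R' S' x).fst = P' x.fst + Q' x.snd from rfl,
      show (blk P' Q' R' S' x).snd = R' x.fst + S' x.snd from rfl,
      map_add, map_add, inner_add_left, inner_add_left]
  have hv : ∀ x : WithLp 2 (H × H), vnormA (AA A) x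
      = Real.sqrt (RCLike.re (inner ℂ (A x.fst) x.fst : ℂ) + RCLike.re (inner ℂ (A x.snd) x.snd : ℂ)) := by
    intro x
    unfold vnormA
    rw [WithLp.prod_inner_apply]
    simp only [WithLp.ofLp_fst, WithLp.ofLp_snd]
    rw [hAA1, hAA2, map_add]
  have hle1 : ∀ x : WithLp 2 (H × H), vnormA (AA A) x = 1 →
      vnormA A x.fst ≤ 1 ∧ vnormA A x.snd ≤ 1 := by
    intro x hx
    rw [hv] at hx
    have hsum := Real.sqrt_eq_one.mp hx
    have h1 := reA_nonneg A hA x.fst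
    have h2 := reA_nonneg A hA x.snd
    constructor
    · exact Real.sqrt_le_one.mpr (by linarith)
    · exact Real.sqrt_le_one.mpr (by linarith)
  set M : ℝ := cP + cQ + cR + cS with hM
  have habs : ∀ (T' : H →L[ℂ] H) (c' : ℝ), 0 < c' →
      (∀ z, vnormA A (T' z) ≤ c' * vnormA A z) →
      ∀ u v : H, vnormA A u ≤ 1 → vnormA A v ≤ 1 →
      ‖(inner ℂ (A (T' u)) v : ℂ)‖ ≤ c' := by
    intro T' c' hc' hb u v hu hv1
    have h1 := csA A hA (T' u) v
    have h2 := hb u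
    have h3 := vnormA_nonneg' A (T' u)
    have h4 := vnormA_nonneg' A v
    have h5 := vnormA_nonneg' A u
    nlinarith
  have hbdd : ∀ x : WithLp 2 (H × H), vnormA (AA A) x = 1 →
      ‖(inner ℂ (AA A (blk P Q R S x)) x : ℂ)‖ ≤ M := by
    intro x hx
    obtain ⟨hx1, hx2⟩ := hle1 x hx
    rw [hinner]
    have t1 := habs P cP hcP hPb x.fst x.fst hx1 hx1
    have t2 := habs Q cQ hcQ hQb x.snd x.fst hx2 hx1
    have t3 := habs R cR hcR hRb x.fst x.snd hx1 hx2
    have t4 := habs S cS hcS hSb x.snd x.snd hx2 hx2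
    calc ‖((inner ℂ (A (P x.fst)) x.fst + inner ℂ (A (Q x.snd)) x.fst
          + (inner ℂ (A (R x.fst)) x.snd + inner ℂ (A (S x.snd)) x.snd) : ℂ))‖
        ≤ ‖((inner ℂ (A (P x.fst)) x.fst + inner ℂ (A (Q x.snd)) x.fst : ℂ))‖
          + ‖((inner ℂ (A (R x.fst)) x.snd + inner ℂ (A (S x.snd)) x.snd : ℂ))‖ :=
          norm_add_le _ _
      _ ≤ (‖((inner ℂ (A (P x.fst)) x.fst : ℂ))‖ + ‖((inner ℂ (A (Q x.snd)) x.fst : ℂ))‖)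
          + (‖((inner ℂ (A (R x.fst)) x.snd : ℂ))‖
            + ‖((inner ℂ (A (S x.snd)) x.snd : ℂ))‖) :=
          add_le_add (norm_add_le _ _) (norm_add_le _ _)
      _ ≤ M := by rw [hM]; linarith
  set S2 : Set ℝ := {c : ℝ | ∃ x : WithLp 2 (H × H), vnormA (AA A) x = 1 ∧
      c = ‖(inner ℂ (AA A (blk P Q R S x)) x : ℂ)‖} with hS2
  have hbddS2 : BddAbove S2 := by
    refine ⟨M, ?_⟩
    rintro c ⟨x, hx, rfl⟩
    exact hbdd x hx
  by_cases hex : ∃ x : WithLp 2 (H × H), vnormA (AA A) x = 1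
  · obtain ⟨x0, hx0⟩ := hex
    have hS2sup : 0 ≤ sSup S2 :=
      le_trans (norm_nonneg _) (le_csSup hbddS2 ⟨x0, hx0, rfl⟩)
    unfold wA
    apply Real.sSup_le _ hS2sup
    rintro c ⟨x, hx, rfl⟩
    set y : WithLp 2 (H × H) := (WithLp.equiv 2 (H × H)).symm (x.fst, -x.snd) with hy
    have hy1 : y.fst = x.fst := rfl
    have hy2 : y.snd = -x.snd := rfl
    have hyn : vnormA (AA A) y = 1 := by
      rw [hv] at hx ⊢
      rw [hy1, hy2, map_neg, inner_neg_neg]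
      exact hx
    have key : (inner ℂ (AA A (blk 0 Q R 0 x)) x : ℂ) * 2
        = inner ℂ (AA A (blk P Q R S x)) x - inner ℂ (AA A (blk P Q R S y)) y := by
      rw [hinner, hinner, hinner, hy1, hy2]
      simp only [ContinuousLinearMap.zero_apply, map_zero, inner_zero_left, map_neg,
        inner_neg_left, inner_neg_right, inner_neg_neg, neg_neg]
      ring
    have hxmem : ‖(inner ℂ (AA A (blk P Q R S x)) x : ℂ)‖ ≤ sSup S2 :=
      le_csSup hbddS2 ⟨x, hx, rfl⟩
    have hymem : ‖(inner ℂ (AA A (blk P Q R S y)) y : ℂ)‖ ≤ sSup S2 :=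
      le_csSup hbddS2 ⟨y, hyn, rfl⟩
    have h2 : ‖((inner ℂ (AA A (blk 0 Q R 0 x)) x : ℂ))‖ * 2
        = ‖((inner ℂ (AA A (blk P Q R S x)) x : ℂ)
            - (inner ℂ (AA A (blk P Q R S y)) y : ℂ))‖ := by
      rw [← key, norm_mul]
      simp
    have h3 : ‖((inner ℂ (AA A (blk P Q R S x)) x : ℂ)
          - (inner ℂ (AA A (blk P Q R S y)) y : ℂ))‖
        ≤ ‖((inner ℂ (AA A (blk P Q R S x)) x : ℂ))‖
          + ‖((inner ℂ (AA A (blk P Q R S y)) y : ℂ))‖ := by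
      simpa using
        norm_sub_le (inner ℂ (AA A (blk P Q R S x)) x : ℂ) (inner ℂ (AA A (blk P Q R S y)) y : ℂ)
    linarith
  · unfold wA
    have he1 : {c : ℝ | ∃ x : WithLp 2 (H × H), vnormA (AA A) x = 1 ∧
        c = ‖(inner ℂ (AA A (blk 0 Q R 0 x)) x : ℂ)‖} = ∅ := by
      ext c; simp only [Set.mem_setOf_eq, Set.mem_empty_iff_false, iff_false]
      rintro ⟨x, hx, -⟩; exact hex ⟨x, hx⟩
    have he2 : {c : ℝ | ∃ x : WithLp 2 (H × H), vnormA (AA A) x = 1 ∧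
        c = ‖(inner ℂ (AA A (blk P Q R S x)) x : ℂ)‖} = ∅ := by
      ext c; simp only [Set.mem_setOf_eq, Set.mem_empty_iff_false, iff_false]
      rintro ⟨x, hx, -⟩; exact hex ⟨x, hx⟩
    rw [he1, he2]
end

section
/- Let P, Q, R, S ∈ B_A(H) (operators admitting A-adjoints). Then ω_𝔸([[P,Q],[R,S]]) ≤ (1/2)(‖P‖_A + ‖S‖_A + ‖PP^{♯_A} + QQ^{♯_A}‖_A^{1/2} + ‖RR^{♯_A} + SS^{♯_A}‖_A^{1/2}). -/
open ContinuousLinearMap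

section helper

variable {H : Type*} [NormedAddCommGroup H] [InnerProductSpace ℂ H] [CompleteSpace H]
variable {A B : H →L[ℂ] H}

lemma innerA (hBsa : IsSelfAdjoint B) (hBB : B ∘L B = A) (x y : H) :
    (inner ℂ (A x) y : ℂ) = inner ℂ (B x) (B y) := by
  have h1 : A x = B (B x) := by rw [← hBB]; rfl
  have h2 : ContinuousLinearMap.adjoint B = B := isSelfAdjoint_iff'.mp hBsa
  rw [h1, ← h2, adjoint_inner_left, h2]

lemma vnormA_eq (hBsa : IsSelfAdjoint B) (hBB : B ∘L B = A) (x : H) :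
    vnormA A x = ‖B x‖ := by
  rw [vnormA, innerA hBsa hBB, inner_self_eq_norm_sq, Real.sqrt_sq (norm_nonneg _)]

lemma opNormA_nonneg (A T : H →L[ℂ] H) : 0 ≤ opNormA A T :=
  Real.sSup_nonneg (by rintro c ⟨x, -, rfl⟩; exact Real.sqrt_nonneg _)

lemma re_innerA_le (hBsa : IsSelfAdjoint B) (hBB : B ∘L B = A) (x y : H) :
    RCLike.re (inner ℂ (A x) y : ℂ) ≤ ‖B x‖ * ‖B y‖ := by
  rw [innerA hBsa hBB]
  exact (RCLike.re_le_norm _).trans (norm_inner_le_norm _ _)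

/-- one-step inequality for `A`-selfadjoint `N`. -/
lemma one_step (hBsa : IsSelfAdjoint B) (hBB : B ∘L B = A)
    (N : H →L[ℂ] H) (hN : A ∘L N = adjoint N ∘L A) (x : H) :
    ‖B (N x)‖ ^ 2 ≤ ‖B (N (N x))‖ * ‖B x‖ := by
  have h1 : (‖B (N x)‖ : ℝ) ^ 2 = RCLike.re (inner ℂ (A (N x)) (N x) : ℂ) := by
    rw [innerA hBsa hBB, inner_self_eq_norm_sq]
  have h2 : (inner ℂ (A (N x)) (N x) : ℂ) = inner ℂ (B x) (B (N (N x))) := by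
    have hANx : A (N x) = adjoint N (A x) := by
      have := congrFun (congrArg DFunLike.coe hN) x
      simpa using this
    rw [hANx, adjoint_inner_left, innerA hBsa hBB]
  rw [h1, h2]
  calc RCLike.re (inner ℂ (B x) (B (N (N x))) : ℂ) ≤ ‖(inner ℂ (B x) (B (N (N x))) : ℂ)‖ :=
        RCLike.re_le_norm _
    _ ≤ ‖B x‖ * ‖B (N (N x))‖ := norm_inner_le_norm _ _
    _ = ‖B (N (N x))‖ * ‖B x‖ := mul_comm _ _

lemma pow_Asa (M : H →L[ℂ] H) (hM : A ∘L M = adjoint M ∘L A) (n : ℕ) :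
    A ∘L (M ^ n) = adjoint (M ^ n) ∘L A := by
  induction n with
  | zero =>
      have h1 : ContinuousLinearMap.adjoint (1 : H →L[ℂ] H) = 1 := by
        rw [← star_eq_adjoint, star_one]
      simp [pow_zero, h1, one_def, show adjoint (ContinuousLinearMap.id ℂ H) = ContinuousLinearMap.id ℂ H from h1]
  | succ n ih =>
      have h1 : M ^ (n + 1) = M ∘L (M ^ n) := by
        rw [pow_succ']; rfl
      have h2 : M ^ (n + 1) = (M ^ n) ∘L M := by
        rw [pow_succ]; rfl
      conv_lhs => rw [h1]
      conv_rhs => rw [h2]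
      rw [adjoint_comp, ← comp_assoc, hM, comp_assoc, ih, ← comp_assoc]

/-- F3: the key norm bound for `A`-selfadjoint `M`. -/
lemma key_bound (hBsa : IsSelfAdjoint B) (hBB : B ∘L B = A)
    (M : H →L[ℂ] H) (hM : A ∘L M = adjoint M ∘L A) (x : H) :
    ‖B (M x)‖ ≤ ‖M‖ * ‖B x‖ := by
  by_cases hBx : B x = 0
  · have h := one_step hBsa hBB M hM x
    rw [hBx, norm_zero, mul_zero] at h
    have : ‖B (M x)‖ = 0 := by nlinarith [norm_nonneg (B (M x))]
    rw [this, hBx, norm_zero, mul_zero]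
  · set a : ℝ := ‖B x‖ with ha_def
    have ha : 0 < a := lt_of_le_of_ne (norm_nonneg _) (fun h => hBx (norm_eq_zero.mp h.symm))
    set t : ℝ := ‖B (M x)‖ with ht_def
    have key : ∀ n : ℕ, t ^ (2 ^ n) * a ≤ ‖B ((M ^ (2 ^ n)) x)‖ * a ^ (2 ^ n) := by
      intro n
      induction n with
      | zero => simp [pow_one, ht_def]
      | succ n ih =>
          have hpow : (M ^ (2 ^ n)) ((M ^ (2 ^ n)) x) = (M ^ (2 ^ (n + 1))) x := by
            have hmul : M ^ (2 ^ n) * M ^ (2 ^ n) = M ^ (2 ^ (n + 1)) := by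
              rw [← pow_add]
              congr 1
              rw [pow_succ]
              ring
            have : (M ^ (2 ^ n)) ∘L (M ^ (2 ^ n)) = M ^ (2 ^ (n + 1)) := by
              rw [← ContinuousLinearMap.mul_def]; exact hmul
            rw [← this]; rfl
          have hstep := one_step hBsa hBB (M ^ (2 ^ n)) (pow_Asa M hM (2 ^ n)) x
          rw [hpow] at hstep
          have h2 : (t ^ (2 ^ n) * a) ^ 2 ≤ (‖B ((M ^ (2 ^ n)) x)‖ * a ^ (2 ^ n)) ^ 2 := by
            apply pow_le_pow_left₀ (by positivity) ih
          have e1 : (t ^ (2 ^ n) * a) ^ 2 = t ^ (2 ^ (n + 1)) * a ^ 2 := by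
            rw [mul_pow, ← pow_mul]
            congr 2
          have e2 : (‖B ((M ^ (2 ^ n)) x)‖ * a ^ (2 ^ n)) ^ 2
              = ‖B ((M ^ (2 ^ n)) x)‖ ^ 2 * a ^ (2 ^ (n + 1)) := by
            rw [mul_pow, ← pow_mul]
            congr 2
          rw [e1, e2] at h2
          have h3 : ‖B ((M ^ (2 ^ n)) x)‖ ^ 2 * a ^ (2 ^ (n + 1))
              ≤ (‖B ((M ^ (2 ^ (n + 1))) x)‖ * a) * a ^ (2 ^ (n + 1)) := by
            apply mul_le_mul_of_nonneg_right hstep (by positivity)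
          have h4 : t ^ (2 ^ (n + 1)) * a ^ 2 ≤ ‖B ((M ^ (2 ^ (n + 1))) x)‖ * a ^ (2 ^ (n + 1)) * a :=
            by nlinarith
          have := mul_le_mul_of_nonneg_right h4 (le_of_lt (inv_pos.mpr ha))
          calc t ^ (2 ^ (n + 1)) * a = (t ^ (2 ^ (n + 1)) * a ^ 2) * a⁻¹ := by
                field_simp
            _ ≤ (‖B ((M ^ (2 ^ (n + 1))) x)‖ * a ^ (2 ^ (n + 1)) * a) * a⁻¹ := this
            _ = ‖B ((M ^ (2 ^ (n + 1))) x)‖ * a ^ (2 ^ (n + 1)) := by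
                field_simp
    -- now conclude
    by_cases hM0 : ‖M‖ = 0
    · have hMz : M = 0 := norm_eq_zero.mp hM0
      rw [ht_def, ha_def, hMz]
      simp
    have hMpos : 0 < ‖M‖ := lt_of_le_of_ne (norm_nonneg _) (Ne.symm hM0)
    set L : ℝ := ‖M‖ * a with hL_def
    have hLpos : 0 < L := mul_pos hMpos ha
    by_contra hcon
    push_neg at hcon
    have hr : 1 < t / L := (one_lt_div hLpos).mpr hcon
    set K : ℝ := ‖B‖ * ‖x‖ / a with hK_def
    obtain ⟨n, hn⟩ := pow_unbounded_of_one_lt K hr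
    have hup : t ^ (2 ^ n) ≤ K * L ^ (2 ^ n) := by
      have h1 := key n
      have h2 : ‖B ((M ^ (2 ^ n)) x)‖ ≤ ‖B‖ * ‖M‖ ^ (2 ^ n) * ‖x‖ := by
        calc ‖B ((M ^ (2 ^ n)) x)‖ ≤ ‖B‖ * ‖(M ^ (2 ^ n)) x‖ := le_opNorm _ _
          _ ≤ ‖B‖ * (‖M ^ (2 ^ n)‖ * ‖x‖) :=
              mul_le_mul_of_nonneg_left (le_opNorm _ _) (norm_nonneg _)
          _ ≤ ‖B‖ * (‖M‖ ^ (2 ^ n) * ‖x‖) := by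
              have := norm_pow_le' M (n := 2 ^ n) (by positivity)
              have := mul_le_mul_of_nonneg_right this (norm_nonneg x)
              nlinarith [norm_nonneg B]
          _ = ‖B‖ * ‖M‖ ^ (2 ^ n) * ‖x‖ := by ring
      have h3 : t ^ (2 ^ n) * a ≤ ‖B‖ * ‖M‖ ^ (2 ^ n) * ‖x‖ * a ^ (2 ^ n) := by
        calc t ^ (2 ^ n) * a ≤ ‖B ((M ^ (2 ^ n)) x)‖ * a ^ (2 ^ n) := h1
          _ ≤ ‖B‖ * ‖M‖ ^ (2 ^ n) * ‖x‖ * a ^ (2 ^ n) := by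
              apply mul_le_mul_of_nonneg_right h2 (by positivity)
      have hLa : L ^ (2 ^ n) = ‖M‖ ^ (2 ^ n) * a ^ (2 ^ n) := mul_pow _ _ _
      rw [hK_def, hLa]
      rw [div_mul_eq_mul_div, le_div_iff₀ ha]
      calc t ^ (2 ^ n) * a ≤ ‖B‖ * ‖M‖ ^ (2 ^ n) * ‖x‖ * a ^ (2 ^ n) := h3
        _ = ‖B‖ * ‖x‖ * (‖M‖ ^ (2 ^ n) * a ^ (2 ^ n)) := by ring
    have hKlt : K < (t / L) ^ (2 ^ n) := by
      calc K < (t / L) ^ n := hn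
        _ ≤ (t / L) ^ (2 ^ n) := pow_le_pow_right₀ hr.le (Nat.lt_two_pow_self (n := n)).le
    have : (t / L) ^ (2 ^ n) ≤ K := by
      rw [div_pow, div_le_iff₀ (by positivity)]
      calc t ^ (2 ^ n) ≤ K * L ^ (2 ^ n) := hup
        _ = K * L ^ (2 ^ n) := rfl
    linarith

/-- F4: promote a crude bound to the `opNormA` bound. -/
lemma opNormA_bound (hBsa : IsSelfAdjoint B) (hBB : B ∘L B = A)
    (T : H →L[ℂ] H) (C : ℝ) (h : ∀ x, ‖B (T x)‖ ≤ C * ‖B x‖) (x : H) :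
    ‖B (T x)‖ ≤ opNormA A T * ‖B x‖ := by
  set C' : ℝ := max C 0 with hC'
  have h' : ∀ y, ‖B (T y)‖ ≤ C' * ‖B y‖ := fun y =>
    (h y).trans (mul_le_mul_of_nonneg_right (le_max_left _ _) (norm_nonneg _))
  have hbdd : BddAbove {c : ℝ | ∃ y : H, vnormA A y = 1 ∧ c = vnormA A (T y)} := by
    refine ⟨C', ?_⟩
    rintro c ⟨y, hy1, rfl⟩
    rw [vnormA_eq hBsa hBB] at hy1 ⊢
    calc ‖B (T y)‖ ≤ C' * ‖B y‖ := h' y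
      _ = C' := by rw [hy1, mul_one]
  by_cases hx : ‖B x‖ = 0
  · have := h' x
    rw [hx, mul_zero] at this
    have h0 : ‖B (T x)‖ = 0 := le_antisymm this (norm_nonneg _)
    rw [h0, hx, mul_zero]
  · have ha : 0 < ‖B x‖ := lt_of_le_of_ne (norm_nonneg _) (Ne.symm hx)
    set z : H := ((‖B x‖ : ℂ))⁻¹ • x with hz
    have hBz : ‖B z‖ = 1 := by
      rw [hz, map_smul, norm_smul]
      simp only [norm_inv, Complex.norm_real, Real.norm_eq_abs, abs_of_pos ha]
      field_simp
    have hBTz : ‖B (T z)‖ = (‖B x‖)⁻¹ * ‖B (T x)‖ := by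
      rw [hz, map_smul, map_smul, norm_smul]
      simp only [norm_inv, Complex.norm_real, Real.norm_eq_abs, abs_of_pos ha]
    have hmem : vnormA A (T z) ∈ {c : ℝ | ∃ y : H, vnormA A y = 1 ∧ c = vnormA A (T y)} :=
      ⟨z, by rw [vnormA_eq hBsa hBB]; exact hBz, rfl⟩
    have hle : vnormA A (T z) ≤ opNormA A T := le_csSup hbdd hmem
    rw [vnormA_eq hBsa hBB, hBTz] at hle
    calc ‖B (T x)‖ = (‖B x‖)⁻¹ * ‖B (T x)‖ * ‖B x‖ := by field_simp
      _ ≤ opNormA A T * ‖B x‖ := mul_le_mul_of_nonneg_right hle ha.le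

/-- scalar lemma -/
lemma scal (a b c d : ℝ) (hab : a ^ 2 + b ^ 2 = 1) (hc : 0 ≤ c) (hd : 0 ≤ d) :
    a ^ 2 * c + a * b * d ≤ c / 2 + Real.sqrt (c ^ 2 + d ^ 2) / 2 := by
  set s := Real.sqrt (c ^ 2 + d ^ 2) with hs_def
  have hs2 : s ^ 2 = c ^ 2 + d ^ 2 := Real.sq_sqrt (by positivity)
  have hs0 : 0 ≤ s := Real.sqrt_nonneg _
  have hz : a ^ 2 + b ^ 2 - 1 = 0 := by linarith
  have hX2 : (2 * a ^ 2 * c + 2 * a * b * d - c) ^ 2 ≤ s ^ 2 := by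
    rw [hs2]
    have hid : (c ^ 2 + d ^ 2) - (2 * a ^ 2 * c + 2 * a * b * d - c) ^ 2
        = 4 * ((a ^ 2 - 1 / 2) * d - a * b * c) ^ 2
          - 4 * a ^ 2 * (c ^ 2 + d ^ 2) * (a ^ 2 + b ^ 2 - 1) := by
      ring
    rw [hz] at hid
    simp only [mul_zero, sub_zero] at hid
    nlinarith [sq_nonneg ((a ^ 2 - 1 / 2) * d - a * b * c)]
  have hXs : 2 * a ^ 2 * c + 2 * a * b * d - c ≤ s := by
    calc 2 * a ^ 2 * c + 2 * a * b * d - c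
        ≤ |2 * a ^ 2 * c + 2 * a * b * d - c| := le_abs_self _
      _ = Real.sqrt ((2 * a ^ 2 * c + 2 * a * b * d - c) ^ 2) := (Real.sqrt_sq_eq_abs _).symm
      _ ≤ Real.sqrt (s ^ 2) := Real.sqrt_le_sqrt hX2
      _ = s := Real.sqrt_sq hs0
  linarith


lemma flipAdj (hAsa : ContinuousLinearMap.adjoint A = A) (T Ts : H →L[ℂ] H)
    (h : A ∘L Ts = adjoint T ∘L A) : A ∘L T = adjoint Ts ∘L A := by
  have h2 := congrArg ContinuousLinearMap.adjoint h
  rw [adjoint_comp, adjoint_comp, adjoint_adjoint, hAsa] at h2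
  exact h2.symm

lemma innerApp (hBsa : IsSelfAdjoint B) (hBB : B ∘L B = A) (T Ts : H →L[ℂ] H)
    (h : A ∘L T = adjoint Ts ∘L A) (z w : H) :
    (inner ℂ (A (T z)) w : ℂ) = inner ℂ (B z) (B (Ts w)) := by
  have h1 : A (T z) = adjoint Ts (A z) := by
    have := congrFun (congrArg DFunLike.coe h) z
    simpa using this
  rw [h1, adjoint_inner_left, innerA hBsa hBB]

lemma norm_sq_eq_re (hBsa : IsSelfAdjoint B) (hBB : B ∘L B = A) (u : H) :
    ‖B u‖ ^ 2 = RCLike.re (inner ℂ (A u) u : ℂ) := by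
  rw [innerA hBsa hBB, inner_self_eq_norm_sq]

lemma comp_Asa (hAsa : ContinuousLinearMap.adjoint A = A) (T Ts : H →L[ℂ] H)
    (h : A ∘L Ts = adjoint T ∘L A) :
    A ∘L (T ∘L Ts) = adjoint (T ∘L Ts) ∘L A := by
  have hAT : A ∘L T = adjoint Ts ∘L A := flipAdj hAsa T Ts h
  rw [adjoint_comp, ← comp_assoc, hAT, comp_assoc, h, ← comp_assoc]

/-- bound for the reduced adjoint. -/
lemma adj_bd (hAsa : ContinuousLinearMap.adjoint A = A) (hBsa : IsSelfAdjoint B)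
    (hBB : B ∘L B = A) (T Ts : H →L[ℂ] H) (h : A ∘L Ts = adjoint T ∘L A) (z : H) :
    ‖B (Ts z)‖ ≤ Real.sqrt ‖T ∘L Ts‖ * ‖B z‖ := by
  have h1 : ‖B (Ts z)‖ ^ 2 ≤ ‖T ∘L Ts‖ * ‖B z‖ ^ 2 := by
    have h2 : ‖B (Ts z)‖ ^ 2 = RCLike.re (inner ℂ (A (Ts z)) (Ts z) : ℂ) :=
      norm_sq_eq_re hBsa hBB _
    have h3 : (inner ℂ (A (Ts z)) (Ts z) : ℂ) = inner ℂ (B z) (B ((T ∘L Ts) z)) :=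
      innerApp hBsa hBB Ts T h z (Ts z)
    have h4 : ‖B ((T ∘L Ts) z)‖ ≤ ‖T ∘L Ts‖ * ‖B z‖ :=
      key_bound hBsa hBB (T ∘L Ts) (comp_Asa hAsa T Ts h) z
    calc ‖B (Ts z)‖ ^ 2 = RCLike.re (inner ℂ (B z) (B ((T ∘L Ts) z)) : ℂ) := by rw [h2, h3]
      _ ≤ ‖(inner ℂ (B z) (B ((T ∘L Ts) z)) : ℂ)‖ := RCLike.re_le_norm _
      _ ≤ ‖B z‖ * ‖B ((T ∘L Ts) z)‖ := norm_inner_le_norm _ _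
      _ ≤ ‖B z‖ * (‖T ∘L Ts‖ * ‖B z‖) :=
          mul_le_mul_of_nonneg_left h4 (norm_nonneg _)
      _ = ‖T ∘L Ts‖ * ‖B z‖ ^ 2 := by ring
  have h5 := Real.sqrt_le_sqrt h1
  rw [Real.sqrt_sq (norm_nonneg _), Real.sqrt_mul (norm_nonneg _), Real.sqrt_sq (norm_nonneg _)]
    at h5
  exact h5

/-- crude bound for `T` itself. -/
lemma op_bd (hAsa : ContinuousLinearMap.adjoint A = A) (hBsa : IsSelfAdjoint B)
    (hBB : B ∘L B = A) (T Ts : H →L[ℂ] H) (h : A ∘L Ts = adjoint T ∘L A) (z : H) :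
    ‖B (T z)‖ ≤ (Real.sqrt ‖T ∘L Ts‖ * ‖B z‖) := by
  have h1 : ‖B (T z)‖ ^ 2 ≤ (Real.sqrt ‖T ∘L Ts‖ * ‖B z‖) * ‖B (T z)‖ := by
    have h2 : ‖B (T z)‖ ^ 2 = RCLike.re (inner ℂ (A (T z)) (T z) : ℂ) := norm_sq_eq_re hBsa hBB _
    have h3 : (inner ℂ (A (T z)) (T z) : ℂ) = inner ℂ (B z) (B (Ts (T z))) :=
      innerApp hBsa hBB T Ts (flipAdj hAsa T Ts h) z (T z)
    calc ‖B (T z)‖ ^ 2 = RCLike.re (inner ℂ (B z) (B (Ts (T z))) : ℂ) := by rw [h2, h3]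
      _ ≤ ‖(inner ℂ (B z) (B (Ts (T z))) : ℂ)‖ := RCLike.re_le_norm _
      _ ≤ ‖B z‖ * ‖B (Ts (T z))‖ := norm_inner_le_norm _ _
      _ ≤ ‖B z‖ * (Real.sqrt ‖T ∘L Ts‖ * ‖B (T z)‖) :=
          mul_le_mul_of_nonneg_left (adj_bd hAsa hBsa hBB T Ts h (T z)) (norm_nonneg _)
      _ = (Real.sqrt ‖T ∘L Ts‖ * ‖B z‖) * ‖B (T z)‖ := by ring
  rcases (norm_nonneg (B (T z))).eq_or_lt with h0 | hpos
  · rw [← h0]; positivity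
  · have h6 : ‖B (T z)‖ * ‖B (T z)‖ ≤ (Real.sqrt ‖T ∘L Ts‖ * ‖B z‖) * ‖B (T z)‖ := by
      nlinarith
    exact le_of_mul_le_mul_right h6 hpos

/-- scaled scalar lemma. -/
lemma scal' (a b C D e p N : ℝ) (hab : a ^ 2 + b ^ 2 = 1) (ha : 0 < a) (hb : 0 ≤ b)
    (hC : 0 ≤ C) (hD : 0 ≤ D) (he : 0 ≤ e)
    (h1 : C ≤ p * a ^ 2) (h2 : C ≤ a * e) (h3 : e ^ 2 + D ^ 2 ≤ N * a ^ 2) :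
    C + b * D ≤ p / 2 + Real.sqrt N / 2 := by
  have hc' : C / a ^ 2 ≤ p := by
    rw [div_le_iff₀ (by positivity)]; linarith
  have hkey := scal a b (C / a ^ 2) (D / a) hab (by positivity) (by positivity)
  have e1 : a ^ 2 * (C / a ^ 2) = C := by field_simp
  have e2 : a * b * (D / a) = b * D := by field_simp
  have harg : (C / a ^ 2) ^ 2 + (D / a) ^ 2 ≤ N := by
    have hC2 : (C / a ^ 2) ^ 2 ≤ (e / a) ^ 2 := by
      apply pow_le_pow_left₀ (by positivity)
      rw [div_le_div_iff₀ (by positivity) ha]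
      nlinarith
    have hsum : (e / a) ^ 2 + (D / a) ^ 2 ≤ N := by
      rw [div_pow, div_pow, ← add_div, div_le_iff₀ (by positivity)]
      linarith
    linarith
  have hs := Real.sqrt_le_sqrt harg
  calc C + b * D = a ^ 2 * (C / a ^ 2) + a * b * (D / a) := by rw [e1, e2]
    _ ≤ (C / a ^ 2) / 2 + Real.sqrt ((C / a ^ 2) ^ 2 + (D / a) ^ 2) / 2 := hkey
    _ ≤ p / 2 + Real.sqrt N / 2 := by linarith

/-- The row estimate. -/
lemma rowBound (hAsa : ContinuousLinearMap.adjoint A = A) (hBsa : IsSelfAdjoint B)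
    (hBB : B ∘L B = A) (P Q Ps Qs : H →L[ℂ] H)
    (hP1 : A ∘L Ps = adjoint P ∘L A) (hQ1 : A ∘L Qs = adjoint Q ∘L A)
    (x₁ x₂ : H) (hx : ‖B x₁‖ ^ 2 + ‖B x₂‖ ^ 2 = 1) :
    ‖(inner ℂ (A (P x₁ + Q x₂)) x₁ : ℂ)‖
      ≤ opNormA A P / 2 + Real.sqrt (opNormA A (P ∘L Ps + Q ∘L Qs)) / 2 := by
  have hAP : A ∘L P = adjoint Ps ∘L A := flipAdj hAsa P Ps hP1
  have hAQ : A ∘L Q = adjoint Qs ∘L A := flipAdj hAsa Q Qs hQ1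
  by_cases hx₁ : B x₁ = 0
  · have hz : (inner ℂ (A (P x₁ + Q x₂)) x₁ : ℂ) = 0 := by
      rw [innerA hBsa hBB, hx₁, inner_zero_right]
    rw [hz, norm_zero]
    have := opNormA_nonneg A P
    have := Real.sqrt_nonneg (opNormA A (P ∘L Ps + Q ∘L Qs))
    linarith
  · have ha : 0 < ‖B x₁‖ :=
      lt_of_le_of_ne (norm_nonneg _) (fun hh => hx₁ (norm_eq_zero.mp hh.symm))
    set M₁ : H →L[ℂ] H := P ∘L Ps + Q ∘L Qs with hM₁def
    have hMP : A ∘L (P ∘L Ps) = adjoint (P ∘L Ps) ∘L A := comp_Asa hAsa P Ps hP1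
    have hMQ : A ∘L (Q ∘L Qs) = adjoint (Q ∘L Qs) ∘L A := comp_Asa hAsa Q Qs hQ1
    have hM₁ : A ∘L M₁ = adjoint M₁ ∘L A := by
      rw [hM₁def, comp_add, map_add, add_comp, hMP, hMQ]
    have hM₁op : ∀ z, ‖B (M₁ z)‖ ≤ opNormA A M₁ * ‖B z‖ :=
      opNormA_bound hBsa hBB M₁ ‖M₁‖ (key_bound hBsa hBB M₁ hM₁)
    have hPop : ∀ z, ‖B (P z)‖ ≤ opNormA A P * ‖B z‖ :=
      opNormA_bound hBsa hBB P (Real.sqrt ‖P ∘L Ps‖) (op_bd hAsa hBsa hBB P Ps hP1)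
    -- the four estimates
    have hterm2 : ‖(inner ℂ (A (Q x₂)) x₁ : ℂ)‖ ≤ ‖B x₂‖ * ‖B (Qs x₁)‖ := by
      rw [innerApp hBsa hBB Q Qs hAQ x₂ x₁]
      exact norm_inner_le_norm _ _
    have hc1 : ‖(inner ℂ (A (P x₁)) x₁ : ℂ)‖ ≤ opNormA A P * ‖B x₁‖ ^ 2 := by
      rw [innerA hBsa hBB]
      calc ‖(inner ℂ (B (P x₁)) (B x₁) : ℂ)‖ ≤ ‖B (P x₁)‖ * ‖B x₁‖ := norm_inner_le_norm _ _
        _ ≤ (opNormA A P * ‖B x₁‖) * ‖B x₁‖ :=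
            mul_le_mul_of_nonneg_right (hPop x₁) (norm_nonneg _)
        _ = opNormA A P * ‖B x₁‖ ^ 2 := by ring
    have hc2 : ‖(inner ℂ (A (P x₁)) x₁ : ℂ)‖ ≤ ‖B x₁‖ * ‖B (Ps x₁)‖ := by
      rw [innerApp hBsa hBB P Ps hAP x₁ x₁]
      exact norm_inner_le_norm _ _
    have hef : ‖B (Ps x₁)‖ ^ 2 + ‖B (Qs x₁)‖ ^ 2 ≤ opNormA A M₁ * ‖B x₁‖ ^ 2 := by
      have hP2 : ‖B (Ps x₁)‖ ^ 2 = RCLike.re (inner ℂ (B x₁) (B ((P ∘L Ps) x₁)) : ℂ) := by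
        rw [norm_sq_eq_re hBsa hBB, innerApp hBsa hBB Ps P hP1 x₁ (Ps x₁)]; rfl
      have hQ2 : ‖B (Qs x₁)‖ ^ 2 = RCLike.re (inner ℂ (B x₁) (B ((Q ∘L Qs) x₁)) : ℂ) := by
        rw [norm_sq_eq_re hBsa hBB, innerApp hBsa hBB Qs Q hQ1 x₁ (Qs x₁)]; rfl
      have hsum : ‖B (Ps x₁)‖ ^ 2 + ‖B (Qs x₁)‖ ^ 2
          = RCLike.re (inner ℂ (B x₁) (B (M₁ x₁)) : ℂ) := by
        rw [hP2, hQ2, ← map_add]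
        congr 1
        rw [← inner_add_right, ← map_add]
        rfl
      rw [hsum]
      calc RCLike.re (inner ℂ (B x₁) (B (M₁ x₁)) : ℂ) ≤ ‖(inner ℂ (B x₁) (B (M₁ x₁)) : ℂ)‖ :=
            RCLike.re_le_norm _
        _ ≤ ‖B x₁‖ * ‖B (M₁ x₁)‖ := norm_inner_le_norm _ _
        _ ≤ ‖B x₁‖ * (opNormA A M₁ * ‖B x₁‖) :=
            mul_le_mul_of_nonneg_left (hM₁op x₁) (norm_nonneg _)
        _ = opNormA A M₁ * ‖B x₁‖ ^ 2 := by ring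
    have hsplit : ‖(inner ℂ (A (P x₁ + Q x₂)) x₁ : ℂ)‖
        ≤ ‖(inner ℂ (A (P x₁)) x₁ : ℂ)‖ + ‖B x₂‖ * ‖B (Qs x₁)‖ := by
      have : (inner ℂ (A (P x₁ + Q x₂)) x₁ : ℂ)
          = inner ℂ (A (P x₁)) x₁ + inner ℂ (A (Q x₂)) x₁ := by
        rw [map_add, inner_add_left]
      rw [this]
      exact (norm_add_le _ _).trans (by linarith [hterm2])
    refine hsplit.trans ?_
    exact scal' ‖B x₁‖ ‖B x₂‖ ‖(inner ℂ (A (P x₁)) x₁ : ℂ)‖ ‖B (Qs x₁)‖ ‖B (Ps x₁)‖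
      (opNormA A P) (opNormA A M₁) hx ha (norm_nonneg _) (norm_nonneg _) (norm_nonneg _)
      (norm_nonneg _) (by nlinarith [hc1]) hc2 hef

end helper


theorem stmt8 {H : Type*} [NormedAddCommGroup H] [InnerProductSpace ℂ H] [CompleteSpace H]
    (A : H →L[ℂ] H) (hA : A.IsPositive)
    (P Q R S Ps Qs Rs Ss : H →L[ℂ] H)
    (hP : IsReducedAdjoint A P Ps) (hQ : IsReducedAdjoint A Q Qs)
    (hR : IsReducedAdjoint A R Rs) (hS : IsReducedAdjoint A S Ss) :
    wA (AA A) (blk P Q R S) ≤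
      (1 / 2) * (opNormA A P + opNormA A S +
        Real.sqrt (opNormA A (P ∘L Ps + Q ∘L Qs)) +
        Real.sqrt (opNormA A (R ∘L Rs + S ∘L Ss))) := by
  obtain ⟨B, hBsa, hBB⟩ : ∃ B : H →L[ℂ] H, IsSelfAdjoint B ∧ B ∘L B = A := by
    have h0 : 0 ≤ A := (nonneg_iff_isPositive A).2 hA
    refine ⟨CFC.sqrt A, IsSelfAdjoint.of_nonneg (CFC.sqrt_nonneg A), ?_⟩
    have := CFC.sqrt_mul_sqrt_self A h0
    simpa [ContinuousLinearMap.mul_def] using this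
  have hAsa : ContinuousLinearMap.adjoint A = A := isSelfAdjoint_iff'.mp hA.isSelfAdjoint
  have hRHS : 0 ≤ (1 / 2) * (opNormA A P + opNormA A S +
      Real.sqrt (opNormA A (P ∘L Ps + Q ∘L Qs)) +
      Real.sqrt (opNormA A (R ∘L Rs + S ∘L Ss))) := by
    have := opNormA_nonneg A P
    have := opNormA_nonneg A S
    have := Real.sqrt_nonneg (opNormA A (P ∘L Ps + Q ∘L Qs))
    have := Real.sqrt_nonneg (opNormA A (R ∘L Rs + S ∘L Ss))
    linarith
  apply Real.sSup_le _ hRHS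
  rintro c ⟨x, hx1, rfl⟩
  have hfst : ∀ y : WithLp 2 (H × H), ((AA A) y).fst = A y.fst := by
    intro y
    show A y.fst + (0 : H →L[ℂ] H) y.snd = A y.fst
    simp
  have hsnd : ∀ y : WithLp 2 (H × H), ((AA A) y).snd = A y.snd := by
    intro y
    show (0 : H →L[ℂ] H) y.fst + A y.snd = A y.snd
    simp
  have hxcomp : ‖B x.fst‖ ^ 2 + ‖B x.snd‖ ^ 2 = 1 := by
    have h1 : Real.sqrt (RCLike.re (inner ℂ ((AA A) x) x : ℂ)) = 1 := hx1
    have h2 : RCLike.re (inner ℂ ((AA A) x) x : ℂ) = 1 := Real.sqrt_eq_one.mp h1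
    have h3 : (inner ℂ ((AA A) x) x : ℂ)
        = inner ℂ (A x.fst) x.fst + inner ℂ (A x.snd) x.snd := by
      rw [WithLp.prod_inner_apply]
      change inner ℂ ((AA A) x).fst x.fst + inner ℂ ((AA A) x).snd x.snd = _
      rw [hfst, hsnd]
    rw [h3, map_add] at h2
    rw [norm_sq_eq_re hBsa hBB, norm_sq_eq_re hBsa hBB]
    exact h2
  have hval : (inner ℂ ((AA A) ((blk P Q R S) x)) x : ℂ)
      = inner ℂ (A (P x.fst + Q x.snd)) x.fst + inner ℂ (A (R x.fst + S x.snd)) x.snd := by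
    rw [WithLp.prod_inner_apply]
    change inner ℂ ((AA A) ((blk P Q R S) x)).fst x.fst
      + inner ℂ ((AA A) ((blk P Q R S) x)).snd x.snd = _
    rw [hfst, hsnd]
    rfl
  have row1 := rowBound hAsa hBsa hBB P Q Ps Qs hP.1 hQ.1 x.fst x.snd hxcomp
  have row2 := rowBound hAsa hBsa hBB S R Ss Rs hS.1 hR.1 x.snd x.fst (by linarith)
  rw [add_comm (S ∘L Ss) (R ∘L Rs)] at row2
  have hcomm : S x.snd + R x.fst = R x.fst + S x.snd := add_comm _ _
  rw [hcomm] at row2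
  calc ‖(inner ℂ ((AA A) ((blk P Q R S) x)) x : ℂ)‖
      = ‖(inner ℂ (A (P x.fst + Q x.snd)) x.fst + inner ℂ (A (R x.fst + S x.snd)) x.snd : ℂ)‖ := by
        rw [← hval]
    _ ≤ ‖(inner ℂ (A (P x.fst + Q x.snd)) x.fst : ℂ)‖
        + ‖(inner ℂ (A (R x.fst + S x.snd)) x.snd : ℂ)‖ := norm_add_le _ _
    _ ≤ (opNormA A P / 2 + Real.sqrt (opNormA A (P ∘L Ps + Q ∘L Qs)) / 2)
        + (opNormA A S / 2 + Real.sqrt (opNormA A (R ∘L Rs + S ∘L Ss)) / 2) := by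
        exact add_le_add row1 row2
    _ = (1 / 2) * (opNormA A P + opNormA A S +
        Real.sqrt (opNormA A (P ∘L Ps + Q ∘L Qs)) +
        Real.sqrt (opNormA A (R ∘L Rs + S ∘L Ss))) := by ring
end
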